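/- Let R and S be topological rings with identity and let φ : R → S be a surjective, continuous, open ring homomorphism. If R is supercomplete, then S is supercomplete. -/

import Mathlib

open Pointwise

/-- A net of subsets of a topological ring, indexed by a preordered set, is Cauchy in the
hyperspace sense. -/
def IsCauchySetNet {R : Type*} [TopologicalSpace R] [Zero R] [Add R] {A : Type*} [Preorder A]
    (S : A → Set R) : Prop :=
  ∀ ε ∈ nhds (0 : R), ∃ a₀ : A, ∀ a b : A, a₀ ≤ a → a₀ ≤ b →
    S a ⊆ S b + ε ∧ S b ⊆ S a + ε

/-- A net of subsets of a topological ring converges in the hyperspace sense to `T`. -/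
def SetNetConvergesTo {R : Type*} [TopologicalSpace R] [Zero R] [Add R] {A : Type*} [Preorder A]
    (S : A → Set R) (T : Set R) : Prop :=
  ∀ ε ∈ nhds (0 : R), ∃ a₀ : A, ∀ a : A, a₀ ≤ a → T ⊆ S a + ε ∧ S a ⊆ T + ε

/-- A topological ring is supercomplete if every Cauchy net (indexed by a directed set) of
nonempty closed subsets converges in the hyperspace sense to some nonempty closed subset. -/
def Supercomplete (R : Type*) [TopologicalSpace R] [Zero R] [Add R] : Prop :=
  ∀ (A : Type) (_ : Preorder A) (_ : Nonempty A),
    (∀ a b : A, ∃ c, a ≤ c ∧ b ≤ c) →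
    ∀ S : A → Set R, (∀ a, IsClosed (S a) ∧ (S a).Nonempty) → IsCauchySetNet S →
      ∃ T : Set R, IsClosed T ∧ T.Nonempty ∧ SetNetConvergesTo S T


lemma closure_subset_add_nhds {G : Type*} [AddGroup G] [TopologicalSpace G]
    [IsTopologicalAddGroup G] {X ε : Set G} (hε : ε ∈ nhds (0 : G)) :
    closure X ⊆ X + ε := by
  intro x hx
  have hN : (fun y => x - y) '' ε ∈ nhds x := by
    have h := (Homeomorph.subLeft x).isOpenMap.image_mem_nhds hε
    simpa using h
  obtain ⟨z, hz, hzX⟩ := mem_closure_iff_nhds.1 hx _ hN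
  obtain ⟨e, he, rfl⟩ := hz
  exact ⟨x - e, hzX, e, he, sub_add_cancel x e⟩

lemma preimage_subset_add {R S : Type*} [Ring R] [Ring S] (φ : R →+* S)
    {X Y : Set S} {ε : Set R} (h : X ⊆ Y + φ '' ε) :
    φ ⁻¹' X ⊆ φ ⁻¹' Y + ε := by
  intro x hx
  obtain ⟨y, hy, z, ⟨e, he, rfl⟩, hxe⟩ := h hx
  refine ⟨x - e, ?_, e, he, sub_add_cancel x e⟩
  show φ (x - e) ∈ Y
  have : φ (x - e) = y := by rw [map_sub, ← hxe]; exact add_sub_cancel_right y (φ e)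
  rwa [this]

/-- The image of a supercomplete topological ring under a surjective, continuous, open ring
homomorphism is supercomplete. -/
theorem supercomplete_of_surjective_open {R S : Type*}
    [Ring R] [TopologicalSpace R] [IsTopologicalRing R] [T2Space R]
    [Ring S] [TopologicalSpace S] [IsTopologicalRing S] [T2Space S]
    (φ : R →+* S) (hsurj : Function.Surjective φ) (hcont : Continuous φ)
    (hopen : IsOpenMap φ) (hR : Supercomplete R) : Supercomplete S := by
  intro A instA hA hdir Snet hcne hcauchy
  set Tnet : A → Set R := fun a => φ ⁻¹' (Snet a) with hTnet
  have himg : ∀ a, φ '' (Tnet a) = Snet a := fun a =>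
    Set.image_preimage_eq _ hsurj
  have hcne' : ∀ a, IsClosed (Tnet a) ∧ (Tnet a).Nonempty := by
    intro a
    refine ⟨(hcne a).1.preimage hcont, ?_⟩
    obtain ⟨s, hs⟩ := (hcne a).2
    obtain ⟨r, rfl⟩ := hsurj s
    exact ⟨r, hs⟩
  have hcauchy' : IsCauchySetNet Tnet := by
    intro ε hε
    have hφε : φ '' ε ∈ nhds (0 : S) := by
      have := hopen.image_mem_nhds hε
      rwa [map_zero] at this
    obtain ⟨a₀, h⟩ := hcauchy (φ '' ε) hφε
    exact ⟨a₀, fun a b ha hb =>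
      ⟨preimage_subset_add φ (h a b ha hb).1, preimage_subset_add φ (h a b ha hb).2⟩⟩
  obtain ⟨T, hTc, hTne, hTconv⟩ := hR A instA hA hdir Tnet hcne' hcauchy'
  refine ⟨closure (φ '' T), isClosed_closure, (hTne.image φ).closure, ?_⟩
  intro ε hε
  obtain ⟨ε₁, hε₁, hε₁ε⟩ := exists_nhds_zero_half hε
  have hε₁add : ε₁ + ε₁ ⊆ ε := by
    rintro _ ⟨v, hv, w, hw, rfl⟩; exact hε₁ε v hv w hw
  have h0ε₁ : (0 : S) ∈ ε₁ := mem_of_mem_nhds hε₁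
  have hε₁sub : ε₁ ⊆ ε := fun v hv => by
    have := hε₁add ⟨v, hv, 0, h0ε₁, (add_zero v)⟩; exact this
  have hδ : φ ⁻¹' ε₁ ∈ nhds (0 : R) := by
    have := hcont.continuousAt (x := (0 : R))
    rw [ContinuousAt, map_zero] at this
    exact this hε₁
  obtain ⟨a₀, h⟩ := hTconv (φ ⁻¹' ε₁) hδ
  refine ⟨a₀, fun a ha => ⟨?_, ?_⟩⟩
  · -- closure (φ '' T) ⊆ Snet a + ε
    have h1 : closure (φ '' T) ⊆ φ '' T + ε₁ := closure_subset_add_nhds hε₁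
    have h2 : φ '' T ⊆ Snet a + ε₁ := by
      have := Set.image_mono (f := φ) (h a ha).1
      rw [Set.image_add, himg a] at this
      refine this.trans (Set.add_subset_add_left ?_)
      exact (Set.image_preimage_subset φ ε₁)
    calc closure (φ '' T) ⊆ (Snet a + ε₁) + ε₁ := h1.trans (Set.add_subset_add_right h2)
      _ = Snet a + (ε₁ + ε₁) := by rw [add_assoc]
      _ ⊆ Snet a + ε := Set.add_subset_add_left hε₁add
  · -- Snet a ⊆ closure (φ '' T) + ε
    have h2 : Snet a ⊆ φ '' T + ε₁ := by
      rw [← himg a]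
      have := Set.image_mono (f := φ) (h a ha).2
      rw [Set.image_add] at this
      exact this.trans (Set.add_subset_add_left (Set.image_preimage_subset φ ε₁))
    refine h2.trans ?_
    exact Set.add_subset_add (subset_closure) hε₁sub
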